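/- Fix d ≥ 1. Let E be the quotient of the space of pairs of complex polynomials (Σ_{j=0}^d α_j u^j, Σ_{j=0}^d β_j u^j) with (α_d, β_d) ≠ (0,0) by the free ℂ* action of coefficientwise multiplication, and let π : E → ℙ¹(ℂ) be π([P:Q]) = (α_d : β_d). Then π is a locally trivial holomorphic fiber bundle. -/

import Mathlib

set_option linter.unusedSectionVars false
set_option linter.unusedVariables false
set_option maxHeartbeats 1000000


noncomputable section

/-- Topology on projectivizations (quotient of the subspace of nonzero vectors).
The projectivization of a vector space is exactly the quotient of the nonzero
vectors by the scaling action of the multiplicative group of the field. -/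
instance projTop (K V : Type*) [DivisionRing K] [AddCommGroup V] [Module K V]
    [TopologicalSpace V] : TopologicalSpace (Projectivization K V) :=
  inferInstanceAs (TopologicalSpace (Quotient (projectivizationSetoid K V)))

/-- The complex projective line ℙ¹(ℂ). -/
abbrev P1 := Projectivization ℂ (Fin 2 → ℂ)

/-- Pairs of polynomials of degree ≤ d, recorded by their coefficients. -/
abbrev PairSpace (d : ℕ) := (Fin (d + 1) → ℂ) × (Fin (d + 1) → ℂ)

/-- `E d`: the quotient of the space of pairs of polynomials of degree ≤ d whose
leading coefficients are not both zero, by the free ℂ* action of coefficientwise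
multiplication. (This quotient is precisely the subset of the projectivization
of the coefficient space where the leading coefficients do not both vanish; the
condition is independent of the chosen representative.) -/
def EE (d : ℕ) : Type :=
  {v : Projectivization ℂ (PairSpace d) //
    ![v.rep.1 (Fin.last d), v.rep.2 (Fin.last d)] ≠ 0}

instance (d : ℕ) : TopologicalSpace (EE d) :=
  inferInstanceAs (TopologicalSpace {v : Projectivization ℂ (PairSpace d) //
    ![v.rep.1 (Fin.last d), v.rep.2 (Fin.last d)] ≠ 0})

/-- The projection π : E → ℙ¹(ℂ) to the leading coefficients (α_d : β_d). -/
def pr (d : ℕ) (e : EE d) : P1 :=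
  Projectivization.mk ℂ ![e.1.rep.1 (Fin.last d), e.1.rep.2 (Fin.last d)] e.2

namespace Stmt4Aux

open Projectivization Set Topology Function

section Generic

variable {V : Type*} [AddCommGroup V] [Module ℂ V] [TopologicalSpace V] [ContinuousSMul ℂ V]

/-- The quotient map from nonzero vectors to the projectivization. -/
def q0 : {v : V // v ≠ 0} → Projectivization ℂ V := fun v => Projectivization.mk ℂ v.1 v.2

lemma q0_eq (v : {v : V // v ≠ 0}) : q0 v = Projectivization.mk ℂ v.1 v.2 := rfl

lemma continuous_q0 : Continuous (q0 (V := V)) := continuous_quotient_mk'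

lemma surjective_q0 : Surjective (q0 (V := V)) :=
  fun x => ⟨⟨x.rep, x.rep_nonzero⟩, x.mk_rep⟩

lemma isQuotientMap_q0 : IsQuotientMap (q0 (V := V)) :=
  isQuotientMap_quotient_mk' (s := projectivizationSetoid ℂ V)

lemma exists_rep_smul (v : V) (hv : v ≠ 0) :
    ∃ c : ℂˣ, (Projectivization.mk ℂ v hv).rep = (c : ℂ) • v := by
  obtain ⟨c, hc⟩ := (Projectivization.mk_eq_mk_iff ℂ _ _
    (Projectivization.mk ℂ v hv).rep_nonzero hv).1 (Projectivization.mk_rep _)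
  exact ⟨c, by rw [← hc, Units.smul_def]⟩

lemma mk_smul_eq (v : V) (hv : v ≠ 0) (c : ℂ) (hc : c ≠ 0) (h' : c • v ≠ 0) :
    Projectivization.mk ℂ (c • v) h' = Projectivization.mk ℂ v hv :=
  (Projectivization.mk_eq_mk_iff' ℂ _ _ _ _).2 ⟨c, rfl⟩

lemma isOpenMap_q0 : IsOpenMap (q0 (V := V)) := by
  intro S hS
  rw [← (isQuotientMap_q0 (V := V)).isOpen_preimage]
  have key : q0 ⁻¹' (q0 '' S) = ⋃ c : ℂˣ, (fun v : {v : V // v ≠ 0} =>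
      (⟨(c : ℂ) • v.1, smul_ne_zero (Units.ne_zero c) v.2⟩ : {v : V // v ≠ 0})) ⁻¹' S := by
    ext v
    simp only [mem_preimage, mem_image, mem_iUnion]
    constructor
    · rintro ⟨s, hs, hq⟩
      rw [q0_eq, q0_eq, Projectivization.mk_eq_mk_iff] at hq
      obtain ⟨a, ha⟩ := hq
      refine ⟨a, ?_⟩
      have : (⟨(a : ℂ) • v.1, smul_ne_zero (Units.ne_zero a) v.2⟩ : {v : V // v ≠ 0}) = s :=
        Subtype.ext (by rw [← ha, Units.smul_def])
      rw [this]; exact hs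
    · rintro ⟨c, hc⟩
      refine ⟨_, hc, ?_⟩
      rw [q0_eq, q0_eq, Projectivization.mk_eq_mk_iff]
      exact ⟨c, by rw [Units.smul_def]⟩
  rw [key]
  exact isOpen_iUnion fun c => hS.preimage ((continuous_const.smul continuous_subtype_val).subtype_mk _)

lemma continuous_mk_of {X : Type*} [TopologicalSpace X] {φ : X → V}
    (hφ : Continuous φ) (h0 : ∀ x, φ x ≠ 0) {f : X → Projectivization ℂ V}
    (hf : ∀ x, f x = Projectivization.mk ℂ (φ x) (h0 x)) : Continuous f := by
  have : f = fun x => q0 ⟨φ x, h0 x⟩ := funext fun x => hf x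
  rw [this]
  exact continuous_q0.comp (hφ.subtype_mk _)

lemma continuousOn_mk_of {X : Type*} [TopologicalSpace X] {S : Set X} {φ : X → V}
    (hφ : ContinuousOn φ S) (h0 : ∀ x ∈ S, φ x ≠ 0) {f : X → Projectivization ℂ V}
    (hf : ∀ x (hx : x ∈ S), f x = Projectivization.mk ℂ (φ x) (h0 x hx)) :
    ContinuousOn f S := by
  rw [continuousOn_iff_continuous_restrict] at hφ ⊢
  have : S.domRestrict f = fun x : S => q0 ⟨φ x.1, h0 x.1 x.2⟩ :=
    funext fun x => hf x.1 x.2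
  rw [this]
  exact continuous_q0.comp (hφ.subtype_mk _)

end Generic

section Concrete

variable {d : ℕ}

/-- the vector of leading coefficients -/
def ld (d : ℕ) (v : PairSpace d) : Fin 2 → ℂ := ![v.1 (Fin.last d), v.2 (Fin.last d)]

/-- the components of a pair -/
def cmp (d : ℕ) (j : Fin 2) (v : PairSpace d) : Fin (d + 1) → ℂ := ![v.1, v.2] j

lemma cmp_zero (v : PairSpace d) : cmp d 0 v = v.1 := rfl
lemma cmp_one (v : PairSpace d) : cmp d 1 v = v.2 := rfl

lemma ld_apply (j : Fin 2) (v : PairSpace d) : ld d v j = cmp d j v (Fin.last d) := by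
  fin_cases j <;> rfl

lemma cmp_smul (c : ℂ) (j : Fin 2) (v : PairSpace d) :
    cmp d j (c • v) = c • cmp d j v := by fin_cases j <;> rfl

lemma ld_smul (c : ℂ) (v : PairSpace d) : ld d (c • v) = c • ld d v := by
  funext j
  rw [Pi.smul_apply, ld_apply, ld_apply, cmp_smul, Pi.smul_apply]

lemma ld_zero : ld d (0 : PairSpace d) = 0 := by
  funext j; fin_cases j <;> simp [ld]

lemma ne_zero_of_ld {v : PairSpace d} (h : ld d v ≠ 0) : v ≠ 0 :=
  fun hv => h (by rw [hv, ld_zero])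

lemma ld_ne_zero_of {v : PairSpace d} {j : Fin 2} (h : ld d v j ≠ 0) : ld d v ≠ 0 :=
  fun hv => h (by rw [hv]; rfl)

lemma ld_one_ne {v : PairSpace d} (h : ld d v ≠ 0) (h0 : ld d v 0 = 0) : ld d v 1 ≠ 0 := by
  intro h1
  apply h
  funext j
  fin_cases j
  · exact h0
  · exact h1

/-- fin-2 exhaustion -/
lemma fin2_cases (i j : Fin 2) : j = i ∨ j = i + 1 := by revert i j; decide

lemma fin2_succ_ne (i : Fin 2) : i + 1 ≠ i := by revert i; decide

lemma cmp_ext {v w : PairSpace d} (h : ∀ j, cmp d j v = cmp d j w) : v = w :=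
  Prod.ext (h 0) (h 1)

/-- shear map producing a representative of an element of the fiber over [0:1] -/
def shear (d : ℕ) (i : Fin 2) (v : PairSpace d) : PairSpace d :=
  (cmp d (i + 1) v - (ld d v (i + 1) / ld d v i) • cmp d i v, cmp d i v)

/-- inverse shear -/
def unshear (d : ℕ) (i : Fin 2) (w : Fin 2 → ℂ) (u : PairSpace d) : PairSpace d :=
  (if (0 : Fin 2) = i then u.2 else u.1 + (w (i + 1) / w i) • u.2,
   if (1 : Fin 2) = i then u.2 else u.1 + (w (i + 1) / w i) • u.2)

lemma cmp_unshear (i j : Fin 2) (w : Fin 2 → ℂ) (u : PairSpace d) :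
    cmp d j (unshear d i w u) = if j = i then u.2 else u.1 + (w (i + 1) / w i) • u.2 := by
  fin_cases j <;> rfl

lemma ld_shear {i : Fin 2} {v : PairSpace d} (hv : ld d v i ≠ 0) :
    ld d (shear d i v) = ![0, ld d v i] := by
  funext j
  fin_cases j
  · show ld d (shear d i v) 0 = 0
    rw [ld_apply, cmp_zero]
    show cmp d (i+1) v (Fin.last d) - (ld d v (i+1) / ld d v i) • cmp d i v (Fin.last d) = 0
    rw [← ld_apply, ← ld_apply, smul_eq_mul, div_mul_cancel₀ _ hv, sub_self]
  · show ld d (shear d i v) 1 = ld d v i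
    rw [ld_apply, cmp_one]
    exact (ld_apply i v).symm

lemma shear_ld_ne {i : Fin 2} {v : PairSpace d} (hv : ld d v i ≠ 0) :
    ld d (shear d i v) ≠ 0 := by
  rw [ld_shear hv]
  intro h
  exact hv (by simpa using congrFun h 1)

lemma shear_fiber {i : Fin 2} {v : PairSpace d} (hv : ld d v i ≠ 0) :
    ld d (shear d i v) 0 = 0 := by
  rw [ld_shear hv]; rfl

lemma shear_smul {c : ℂ} (hc : c ≠ 0) (i : Fin 2) (v : PairSpace d) :
    shear d i (c • v) = c • shear d i v := by
  refine Prod.ext ?_ ?_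
  · show cmp d (i+1) (c • v) - (ld d (c • v) (i+1) / ld d (c • v) i) • cmp d i (c • v)
      = c • (cmp d (i+1) v - (ld d v (i+1) / ld d v i) • cmp d i v)
    rw [cmp_smul, cmp_smul, ld_smul, Pi.smul_apply, Pi.smul_apply, smul_eq_mul, smul_eq_mul,
      mul_div_mul_left _ _ hc, smul_sub, smul_comm c]
  · show cmp d i (c • v) = c • cmp d i v
    rw [cmp_smul]

lemma unshear_shear {i : Fin 2} {v : PairSpace d} (hv : ld d v i ≠ 0) :
    unshear d i (ld d v) (shear d i v) = v := by
  apply cmp_ext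
  intro j
  rcases fin2_cases i j with rfl | rfl
  · rw [cmp_unshear, if_pos rfl]
    rfl
  · rw [cmp_unshear, if_neg (fin2_succ_ne i)]
    show (cmp d (i+1) v - (ld d v (i+1) / ld d v i) • cmp d i v)
        + (ld d v (i+1) / ld d v i) • cmp d i v = cmp d (i+1) v
    rw [sub_add_cancel]

lemma shear_unshear {i : Fin 2} {w : Fin 2 → ℂ} {u : PairSpace d} (hw : w i ≠ 0)
    (h0 : ld d u 0 = 0) (h2 : ld d u 1 ≠ 0) :
    shear d i (unshear d i w u) = u := by
  have hci : cmp d i (unshear d i w u) = u.2 := by rw [cmp_unshear, if_pos rfl]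
  have hci' : cmp d (i + 1) (unshear d i w u) = u.1 + (w (i + 1) / w i) • u.2 := by
    rw [cmp_unshear, if_neg (fin2_succ_ne i)]
  have hldi : ld d (unshear d i w u) i = ld d u 1 := by
    rw [ld_apply, hci, ← cmp_one, ← ld_apply]
  have hldi' : ld d (unshear d i w u) (i + 1) = (w (i + 1) / w i) * ld d u 1 := by
    rw [ld_apply, hci', Pi.add_apply, Pi.smul_apply, smul_eq_mul]
    rw [ld_apply, cmp_zero] at h0
    rw [h0, zero_add, ld_apply, cmp_one]
  refine Prod.ext ?_ ?_
  · show cmp d (i+1) (unshear d i w u)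
      - (ld d (unshear d i w u) (i+1) / ld d (unshear d i w u) i) • cmp d i (unshear d i w u)
      = u.1
    rw [hci, hci', hldi, hldi', mul_div_assoc, div_self h2, mul_one, add_sub_cancel_right]
  · show cmp d i (unshear d i w u) = u.2
    exact hci

lemma ld_unshear {i : Fin 2} {w : Fin 2 → ℂ} {u : PairSpace d} (hw : w i ≠ 0)
    (h0 : ld d u 0 = 0) :
    ld d (unshear d i w u) = (ld d u 1 / w i) • w := by
  have h0' : u.1 (Fin.last d) = 0 := by rw [ld_apply, cmp_zero] at h0; exact h0
  have h1' : ld d u 1 = u.2 (Fin.last d) := by rw [ld_apply, cmp_one]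
  funext j
  rcases fin2_cases i j with rfl | rfl
  · rw [ld_apply, cmp_unshear, if_pos rfl, Pi.smul_apply, smul_eq_mul,
      div_mul_cancel₀ _ hw, h1']
  · rw [ld_apply, cmp_unshear, if_neg (fin2_succ_ne i)]
    show (u.1 + (w (i+1) / w i) • u.2) (Fin.last d) = ((ld d u 1 / w i) • w) (i + 1)
    rw [Pi.add_apply, Pi.smul_apply, smul_eq_mul, h0', zero_add, h1', Pi.smul_apply,
      smul_eq_mul]
    field_simp

lemma unshear_ld_ne {i : Fin 2} {w : Fin 2 → ℂ} {u : PairSpace d} (hw : w i ≠ 0)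
    (hwv : w ≠ 0) (h0 : ld d u 0 = 0) (h2 : ld d u 1 ≠ 0) :
    ld d (unshear d i w u) ≠ 0 := by
  rw [ld_unshear hw h0]
  exact smul_ne_zero (div_ne_zero h2 hw) hwv

lemma unshear_smul_left {i : Fin 2} {c : ℂ} (hc : c ≠ 0) (w : Fin 2 → ℂ) (u : PairSpace d) :
    unshear d i (c • w) u = unshear d i w u := by
  have : (c • w) (i + 1) / (c • w) i = w (i + 1) / w i := by
    simp only [Pi.smul_apply, smul_eq_mul]
    rw [mul_div_mul_left _ _ hc]
  unfold unshear
  rw [this]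

lemma unshear_smul_right {i : Fin 2} (c : ℂ) (w : Fin 2 → ℂ) (u : PairSpace d) :
    unshear d i w (c • u) = c • unshear d i w u := by
  apply cmp_ext
  intro j
  rw [cmp_smul, cmp_unshear, cmp_unshear]
  split_ifs
  · rfl
  · show c • u.1 + (w (i+1)/w i) • c • u.2 = c • (u.1 + (w (i+1)/w i) • u.2)
    rw [smul_add, smul_comm c]

lemma continuous_cmp (j : Fin 2) : Continuous (cmp d j) := by
  fin_cases j
  · exact continuous_fst
  · exact continuous_snd

lemma continuous_ld : Continuous (ld d) := by
  apply continuous_pi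
  intro j
  fin_cases j
  · show Continuous fun v : PairSpace d => v.1 (Fin.last d)
    exact (continuous_apply _).comp continuous_fst
  · show Continuous fun v : PairSpace d => v.2 (Fin.last d)
    exact (continuous_apply _).comp continuous_snd

end Concrete

section Quot

variable {d : ℕ}

lemma ld_rep_ne_iff (v : PairSpace d) (hv : v ≠ 0) :
    ld d (Projectivization.mk ℂ v hv).rep ≠ 0 ↔ ld d v ≠ 0 := by
  obtain ⟨c, hc⟩ := exists_rep_smul v hv
  rw [hc, ld_smul, smul_ne_zero_iff]
  exact and_iff_right (Units.ne_zero c)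

/-- make an element of `EE d` -/
def mkE (d : ℕ) (v : PairSpace d) (h : ld d v ≠ 0) : EE d :=
  ⟨Projectivization.mk ℂ v (ne_zero_of_ld h), by
    show ld d (Projectivization.mk ℂ v (ne_zero_of_ld h)).rep ≠ 0
    exact (ld_rep_ne_iff v _).2 h⟩

lemma pr_eq (e : EE d) : pr d e = Projectivization.mk ℂ (ld d e.1.rep) e.2 := rfl

lemma eq_mkE (e : EE d) : e = mkE d e.1.rep e.2 :=
  Subtype.ext (Projectivization.mk_rep e.1).symm

lemma mkE_eq_mkE {v w : PairSpace d} {h : ld d v ≠ 0} {h' : ld d w ≠ 0} (c : ℂˣ)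
    (hc : w = (c : ℂ) • v) : mkE d w h' = mkE d v h := by
  subst hc
  exact Subtype.ext (mk_smul_eq v (ne_zero_of_ld h) c (Units.ne_zero c) _)

lemma pr_mkE (v : PairSpace d) (h : ld d v ≠ 0) :
    pr d (mkE d v h) = Projectivization.mk ℂ (ld d v) h := by
  rw [pr_eq]
  obtain ⟨c, hc⟩ := exists_rep_smul v (ne_zero_of_ld h)
  have hld : ld d (mkE d v h).1.rep = (c : ℂ) • ld d v := by
    show ld d (Projectivization.mk ℂ v (ne_zero_of_ld h)).rep = _
    rw [hc, ld_smul]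
  exact (Projectivization.mk_eq_mk_iff' ℂ _ _ _ _).2 ⟨c, hld.symm⟩

/-- standard open sets of `P1` -/
def Uset (i : Fin 2) : Set P1 := {b | b.rep i ≠ 0}

lemma mk_mem_Uset_iff (w : Fin 2 → ℂ) (hw : w ≠ 0) (i : Fin 2) :
    Projectivization.mk ℂ w hw ∈ Uset i ↔ w i ≠ 0 := by
  obtain ⟨c, hc⟩ := exists_rep_smul w hw
  show (Projectivization.mk ℂ w hw).rep i ≠ 0 ↔ _
  rw [hc, Pi.smul_apply, smul_eq_mul, mul_ne_zero_iff]
  exact and_iff_right (Units.ne_zero c)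

lemma isOpen_Uset (i : Fin 2) : IsOpen (Uset i) := by
  rw [← (isQuotientMap_q0 (V := Fin 2 → ℂ)).isOpen_preimage]
  have key : q0 ⁻¹' (Uset i) = {w : {w : Fin 2 → ℂ // w ≠ 0} | w.1 i ≠ 0} := by
    ext w
    exact mk_mem_Uset_iff w.1 w.2 i
  rw [key]
  exact isOpen_compl_singleton.preimage ((continuous_apply i).comp continuous_subtype_val)

/-- the base point [0 : 1] -/
def pt : P1 := Projectivization.mk ℂ ![0, 1] (by
  intro h; have := congrFun h 1; simp at this)

/-- the model fiber set -/
def SF (d : ℕ) : Set (EE d) := pr d ⁻¹' {pt}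

lemma mem_SF_iff (e : EE d) : e ∈ SF d ↔ ld d e.1.rep 0 = 0 := by
  show pr d e = pt ↔ _
  rw [pr_eq]
  constructor
  · intro h
    obtain ⟨c, hc⟩ := (Projectivization.mk_eq_mk_iff ℂ _ _ _ _).1 h
    rw [← hc, Units.smul_def, Pi.smul_apply, smul_eq_mul]
    simp
  · intro h0
    have h1 : ld d e.1.rep 1 ≠ 0 := ld_one_ne e.2 h0
    apply (Projectivization.mk_eq_mk_iff' ℂ _ _ _ _).2
    refine ⟨ld d e.1.rep 1, ?_⟩
    funext j
    fin_cases j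
    · simpa using h0.symm
    · simp

/-- the set in the projectivization corresponding to `EE d` -/
def T0 (d : ℕ) : Set (Projectivization ℂ (PairSpace d)) := {x | ld d x.rep ≠ 0}

/-- domain of the restricted quotient map -/
def DD (d : ℕ) : Set {v : PairSpace d // v ≠ 0} := q0 ⁻¹' T0 d

/-- the restricted quotient map onto `EE d` -/
def QE (d : ℕ) : ↥(DD d) → EE d := fun w => ⟨q0 w.1, w.2⟩

lemma mem_DD_iff (w : {v : PairSpace d // v ≠ 0}) : w ∈ DD d ↔ ld d w.1 ≠ 0 :=
  ld_rep_ne_iff w.1 w.2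

lemma ld_DD_ne (w : ↥(DD d)) : ld d w.1.1 ≠ 0 := (mem_DD_iff w.1).1 w.2

lemma QE_eq (w : ↥(DD d)) (h : ld d w.1.1 ≠ 0) : QE d w = mkE d w.1.1 h :=
  Subtype.ext rfl

lemma continuous_QE : Continuous (QE d) :=
  (continuous_q0 (V := PairSpace d)).restrictPreimage (s := T0 d)

lemma isOpenMap_QE : IsOpenMap (QE d) :=
  (isOpenMap_q0 (V := PairSpace d)).restrictPreimage (T0 d)

lemma surjective_QE : Surjective (QE d) :=
  (surjective_q0 (V := PairSpace d)).restrictPreimage (T0 d)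

lemma isQuotientMap_QE : IsQuotientMap (QE d) :=
  (isOpenMap_QE (d := d)).isQuotientMap continuous_QE surjective_QE

lemma continuous_pr : Continuous (pr d) := by
  rw [(isQuotientMap_QE (d := d)).continuous_iff]
  exact continuous_mk_of
    (φ := fun w : ↥(DD d) => ld d w.1.1)
    (continuous_ld.comp (continuous_subtype_val.comp continuous_subtype_val))
    (fun w => ld_DD_ne w)
    (fun w => by
      show pr d (QE d w) = _
      rw [QE_eq w (ld_DD_ne w), pr_mkE])

lemma ld_rep_apply_eq_iff (v : PairSpace d) (hv : v ≠ 0) (j : Fin 2) :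
    ld d (Projectivization.mk ℂ v hv).rep j = 0 ↔ ld d v j = 0 := by
  obtain ⟨c, hc⟩ := exists_rep_smul v hv
  rw [hc, ld_smul, Pi.smul_apply, smul_eq_mul, mul_eq_zero]
  exact or_iff_right (Units.ne_zero c)

lemma ld_rep_apply_ne_iff (v : PairSpace d) (hv : v ≠ 0) (j : Fin 2) :
    ld d (Projectivization.mk ℂ v hv).rep j ≠ 0 ↔ ld d v j ≠ 0 :=
  not_congr (ld_rep_apply_eq_iff v hv j)

lemma mkE_mem_SF_iff (v : PairSpace d) (h : ld d v ≠ 0) :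
    mkE d v h ∈ SF d ↔ ld d v 0 = 0 := by
  rw [mem_SF_iff]
  exact ld_rep_apply_eq_iff v _ 0

end Quot

section Chart

variable {d : ℕ}

/-- a reference element of the fiber -/
def v0 (d : ℕ) : PairSpace d := (0, fun _ => 1)

lemma ld_v0_zero : ld d (v0 d) 0 = 0 := by simp [ld, v0]

lemma ld_v0_ne : ld d (v0 d) ≠ 0 := by
  intro h
  have := congrFun h 1
  simp [ld, v0] at this

/-- a reference element of `EE d` -/
def E0 (d : ℕ) : EE d := mkE d (v0 d) ld_v0_ne

/-- a reference element of the model fiber -/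
def F0 (d : ℕ) : ↥(SF d) := ⟨E0 d, (mkE_mem_SF_iff _ _).2 ld_v0_zero⟩

lemma SF_ld (f : ↥(SF d)) : ld d f.1.1.rep ≠ 0 := f.1.2
lemma SF_ld0 (f : ↥(SF d)) : ld d f.1.1.rep 0 = 0 := (mem_SF_iff f.1).1 f.2
lemma SF_ld1 (f : ↥(SF d)) : ld d f.1.1.rep 1 ≠ 0 := ld_one_ne (SF_ld f) (SF_ld0 f)

lemma source_iff (i : Fin 2) (e : EE d) : pr d e ∈ Uset i ↔ ld d e.1.rep i ≠ 0 := by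
  rw [pr_eq]
  exact mk_mem_Uset_iff _ e.2 i

lemma ld_unshear_i {i : Fin 2} {w : Fin 2 → ℂ} {u : PairSpace d} (hw : w i ≠ 0)
    (h0 : ld d u 0 = 0) (h2 : ld d u 1 ≠ 0) : ld d (unshear d i w u) i ≠ 0 := by
  rw [ld_unshear hw h0, Pi.smul_apply, smul_eq_mul, div_mul_cancel₀ _ hw]
  exact h2

/-- forward map of the chart over `Uset i` -/
def chartTo (d : ℕ) (i : Fin 2) (e : EE d) : P1 × ↥(SF d) :=
  (pr d e,
    if h : ld d e.1.rep i ≠ 0 then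
      ⟨mkE d (shear d i e.1.rep) (shear_ld_ne h), (mkE_mem_SF_iff _ _).2 (shear_fiber h)⟩
    else F0 d)

/-- inverse map of the chart over `Uset i` -/
def chartInv (d : ℕ) (i : Fin 2) (p : P1 × ↥(SF d)) : EE d :=
  if h : p.1.rep i ≠ 0 then
    mkE d (unshear d i p.1.rep p.2.1.1.rep)
      (unshear_ld_ne h p.1.rep_nonzero (SF_ld0 p.2) (SF_ld1 p.2))
  else E0 d

/-- the domain set for the fiber quotient map -/
def SFD (d : ℕ) : Set ↥(DD d) := QE d ⁻¹' SF d

/-- the quotient map onto the model fiber -/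
def qF (d : ℕ) : ↥(SFD d) → ↥(SF d) := fun φ => ⟨QE d φ.1, φ.2⟩

lemma continuous_qF : Continuous (qF d) :=
  (continuous_QE (d := d)).restrictPreimage (s := SF d)

lemma isOpenMap_qF : IsOpenMap (qF d) :=
  (isOpenMap_QE (d := d)).restrictPreimage (SF d)

lemma surjective_qF : Surjective (qF d) :=
  (surjective_QE (d := d)).restrictPreimage (SF d)

lemma SFD_ld0 (φ : ↥(SFD d)) : ld d φ.1.1.1 0 = 0 :=
  (ld_rep_apply_eq_iff φ.1.1.1 φ.1.1.2 0).1 ((mem_SF_iff _).1 φ.2)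

lemma SFD_ld1 (φ : ↥(SFD d)) : ld d φ.1.1.1 1 ≠ 0 :=
  ld_one_ne (ld_DD_ne φ.1) (SFD_ld0 φ)

/-- the trivialization of `pr d` over `Uset i`. -/
def chart (d : ℕ) (i : Fin 2) : Bundle.Trivialization (↥(SF d)) (pr d) where
  toOpenPartialHomeomorph :=
  { toFun := chartTo d i
    invFun := chartInv d i
    source := pr d ⁻¹' Uset i
    target := Uset i ×ˢ univ
    map_source' := fun e he => ⟨he, mem_univ _⟩
    map_target' := by
      intro p hp
      have hw : p.1.rep i ≠ 0 := hp.1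
      show pr d (chartInv d i p) ∈ Uset i
      simp only [chartInv]
      rw [dif_pos hw, pr_mkE, mk_mem_Uset_iff]
      exact ld_unshear_i hw (SF_ld0 p.2) (SF_ld1 p.2)
    left_inv' := by
      intro e he
      have h : ld d e.1.rep i ≠ 0 := (source_iff i e).1 he
      have hw : (pr d e).rep i ≠ 0 := he
      have hw' : (chartTo d i e).1.rep i ≠ 0 := hw
      have hd : (chartTo d i e).2 = ⟨mkE d (shear d i e.1.rep) (shear_ld_ne h),
          (mkE_mem_SF_iff _ _).2 (shear_fiber h)⟩ := by
        simp only [chartTo]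
        exact dif_pos h
      show chartInv d i (chartTo d i e) = e
      simp only [chartInv]
      rw [dif_pos hw']
      obtain ⟨c1, hc1⟩ := exists_rep_smul (ld d e.1.rep) e.2
      obtain ⟨c2, hc2⟩ := exists_rep_smul (shear d i e.1.rep) (ne_zero_of_ld (shear_ld_ne h))
      have key : unshear d i (chartTo d i e).1.rep (chartTo d i e).2.1.1.rep
          = (c2 : ℂ) • e.1.rep := by
        have hfst : (chartTo d i e).1.rep = (c1 : ℂ) • ld d e.1.rep := hc1
        have hsnd : (chartTo d i e).2.1.1.rep = (c2 : ℂ) • shear d i e.1.rep := by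
          rw [hd]; exact hc2
        rw [hfst, hsnd, unshear_smul_left (Units.ne_zero c1), unshear_smul_right,
          unshear_shear h]
      exact (mkE_eq_mkE c2 key).trans (eq_mkE e).symm
    right_inv' := by
      intro p hp
      have hw : p.1.rep i ≠ 0 := hp.1
      simp only [chartInv]
      rw [dif_pos hw]
      have h0 := SF_ld0 p.2
      have h2 := SF_ld1 p.2
      have hpf := unshear_ld_ne hw p.1.rep_nonzero h0 h2
      have hcond : ld d (mkE d (unshear d i p.1.rep p.2.1.1.rep) hpf).1.rep i ≠ 0 :=
        (ld_rep_apply_ne_iff _ _ i).2 (ld_unshear_i hw h0 h2)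
      refine Prod.ext ?_ ?_
      · show pr d (mkE d (unshear d i p.1.rep p.2.1.1.rep) _) = p.1
        rw [pr_mkE]
        have h1 : Projectivization.mk ℂ (ld d (unshear d i p.1.rep p.2.1.1.rep)) hpf
            = Projectivization.mk ℂ p.1.rep p.1.rep_nonzero :=
          (Projectivization.mk_eq_mk_iff' ℂ _ _ _ _).2
            ⟨ld d p.2.1.1.rep 1 / p.1.rep i, (ld_unshear hw h0).symm⟩
        rw [h1, Projectivization.mk_rep]
      · show (chartTo d i (mkE d (unshear d i p.1.rep p.2.1.1.rep) hpf)).2 = p.2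
        simp only [chartTo]
        rw [dif_pos hcond]
        obtain ⟨c3, hc3⟩ := exists_rep_smul (unshear d i p.1.rep p.2.1.1.rep)
          (ne_zero_of_ld hpf)
        have hrep3 : (mkE d (unshear d i p.1.rep p.2.1.1.rep) hpf).1.rep
            = (c3 : ℂ) • unshear d i p.1.rep p.2.1.1.rep := hc3
        have key : shear d i (mkE d (unshear d i p.1.rep p.2.1.1.rep) hpf).1.rep
            = (c3 : ℂ) • p.2.1.1.rep := by
          rw [hrep3, shear_smul (Units.ne_zero c3), shear_unshear hw h0 h2]
        exact Subtype.ext ((mkE_eq_mkE (h' := shear_ld_ne hcond) c3 key).trans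
          (eq_mkE p.2.1).symm)
    open_source := (isOpen_Uset i).preimage continuous_pr
    open_target := (isOpen_Uset i).prod isOpen_univ
    continuousOn_toFun := by
      rw [(isQuotientMap_QE (d := d)).continuousOn_isOpen_iff
        ((isOpen_Uset i).preimage continuous_pr)]
      have memS : ∀ w : ↥(DD d), w ∈ QE d ⁻¹' (pr d ⁻¹' Uset i) ↔ ld d w.1.1 i ≠ 0 := by
        intro w
        have : pr d (QE d w) ∈ Uset i ↔ ld d (QE d w).1.rep i ≠ 0 := source_iff i (QE d w)
        rw [mem_preimage, mem_preimage, this]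
        exact ld_rep_apply_ne_iff w.1.1 w.1.2 i
      have cont_χ : Continuous (fun w : ↥(DD d) => w.1.1) :=
        continuous_subtype_val.comp continuous_subtype_val
      simp only [Function.comp_def, chartTo]
      apply ContinuousOn.prodMk
      · exact (continuous_pr.comp continuous_QE).continuousOn
      · rw [IsEmbedding.subtypeVal.isInducing.continuousOn_iff]
        refine (IsEmbedding.subtypeVal.isInducing.continuousOn_iff).2 ?_
        refine continuousOn_mk_of (φ := fun w : ↥(DD d) => shear d i w.1.1)
          (ContinuousOn.prodMk
            (ContinuousOn.sub ((((continuous_cmp (i + 1)).comp cont_χ)).continuousOn)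
              (ContinuousOn.smul
                (ContinuousOn.div
                  ((((continuous_apply (i + 1)).comp (continuous_ld.comp
                    cont_χ))).continuousOn)
                  ((((continuous_apply i).comp (continuous_ld.comp cont_χ))).continuousOn)
                  (fun w hw => (memS w).1 hw))
                ((((continuous_cmp i).comp cont_χ)).continuousOn)))
            ((((continuous_cmp i).comp cont_χ)).continuousOn))
          (fun w hw => ne_zero_of_ld (shear_ld_ne ((memS w).1 hw))) ?_
        intro w hw
        have hwi : ld d w.1.1 i ≠ 0 := (memS w).1 hw
        have hrep : ld d (QE d w).1.rep i ≠ 0 := (ld_rep_apply_ne_iff w.1.1 w.1.2 i).2 hwi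
        show ((if h : ld d (QE d w).1.rep i ≠ 0 then
            (⟨mkE d (shear d i (QE d w).1.rep) (shear_ld_ne h),
              (mkE_mem_SF_iff _ _).2 (shear_fiber h)⟩ : ↥(SF d))
          else F0 d) : ↥(SF d)).1.1 = _
        rw [dif_pos hrep]
        obtain ⟨c, hc⟩ := exists_rep_smul w.1.1 w.1.2
        have hc' : (QE d w).1.rep = (c : ℂ) • w.1.1 := hc
        have hsh : shear d i (QE d w).1.rep = (c : ℂ) • shear d i w.1.1 := by
          rw [hc', shear_smul (Units.ne_zero c)]
        exact (Projectivization.mk_eq_mk_iff' ℂ _ _ (ne_zero_of_ld (shear_ld_ne hrep))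
          (ne_zero_of_ld (shear_ld_ne hwi))).2 ⟨c, hsh.symm⟩
    continuousOn_invFun := by
      have hQP : IsQuotientMap (Prod.map (q0 (V := Fin 2 → ℂ)) (qF d)) :=
        ((isOpenMap_q0.prodMap isOpenMap_qF).isQuotientMap
          (continuous_q0.prodMap continuous_qF)
          (surjective_q0.prodMap surjective_qF))
      rw [hQP.continuousOn_isOpen_iff ((isOpen_Uset i).prod isOpen_univ)]
      set S' := Prod.map (q0 (V := Fin 2 → ℂ)) (qF d) ⁻¹' (Uset i ×ˢ univ) with hS'
      have memS' : ∀ p : {w : Fin 2 → ℂ // w ≠ 0} × ↥(SFD d), p ∈ S' → p.1.1 i ≠ 0 :=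
        fun p hp => (mk_mem_Uset_iff p.1.1 p.1.2 i).1 hp.1
      have cu : Continuous (fun p : {w : Fin 2 → ℂ // w ≠ 0} × ↥(SFD d) => p.2.1.1.1) :=
        continuous_subtype_val.comp (continuous_subtype_val.comp
          (continuous_subtype_val.comp continuous_snd))
      have cw : Continuous (fun p : {w : Fin 2 → ℂ // w ≠ 0} × ↥(SFD d) => p.1.1) :=
        continuous_subtype_val.comp continuous_fst
      refine (IsEmbedding.subtypeVal.isInducing.continuousOn_iff).2 ?_
      have hbr : ∀ j0 : Fin 2, ContinuousOn (fun x : {w : Fin 2 → ℂ // w ≠ 0} × ↥(SFD d) =>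
          if j0 = i then (x.2.1.1.1).2
          else (x.2.1.1.1).1 + (x.1.1 (i + 1) / x.1.1 i) • (x.2.1.1.1).2) S' := by
        intro j0
        split_ifs
        · exact ((continuous_snd.comp cu)).continuousOn
        · refine ((continuous_fst.comp cu).continuousOn).add (ContinuousOn.smul
            (ContinuousOn.div ((((continuous_apply (i + 1)).comp cw)).continuousOn)
              ((((continuous_apply i).comp cw)).continuousOn) memS')
            ((continuous_snd.comp cu).continuousOn))
      refine continuousOn_mk_of
        (φ := fun p : {w : Fin 2 → ℂ // w ≠ 0} × ↥(SFD d) => unshear d i p.1.1 p.2.1.1.1)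
        (by simp only [unshear]; exact ContinuousOn.prodMk (hbr 0) (hbr 1))
        (fun p hp => ne_zero_of_ld (unshear_ld_ne (memS' p hp) p.1.2
          (SFD_ld0 p.2) (SFD_ld1 p.2))) ?_
      intro p hp
      have hwi : p.1.1 i ≠ 0 := memS' p hp
      have hb : (q0 p.1).rep i ≠ 0 := (mk_mem_Uset_iff p.1.1 p.1.2 i).2 hwi
      show (chartInv d i (Prod.map q0 (qF d) p) : EE d).1 = _
      simp only [chartInv]
      have hb' : (Prod.map (q0 (V := Fin 2 → ℂ)) (qF d) p).1.rep i ≠ 0 := hb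
      rw [dif_pos hb']
      obtain ⟨c1, hc1⟩ := exists_rep_smul p.1.1 p.1.2
      obtain ⟨c2, hc2⟩ := exists_rep_smul p.2.1.1.1 p.2.1.1.2
      have hc1' : (Prod.map (q0 (V := Fin 2 → ℂ)) (qF d) p).1.rep = (c1 : ℂ) • p.1.1 := hc1
      have hc2' : (Prod.map (q0 (V := Fin 2 → ℂ)) (qF d) p).2.1.1.rep
          = (c2 : ℂ) • p.2.1.1.1 := hc2
      have hun : unshear d i (Prod.map (q0 (V := Fin 2 → ℂ)) (qF d) p).1.rep
          (Prod.map (q0 (V := Fin 2 → ℂ)) (qF d) p).2.1.1.rep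
          = (c2 : ℂ) • unshear d i p.1.1 p.2.1.1.1 := by
        rw [hc1', hc2', unshear_smul_left (Units.ne_zero c1), unshear_smul_right]
      exact (Projectivization.mk_eq_mk_iff' ℂ _ _ _
        (ne_zero_of_ld (unshear_ld_ne hwi p.1.2 (SFD_ld0 p.2) (SFD_ld1 p.2)))).2
        ⟨c2, hun.symm⟩ }
  baseSet := Uset i
  open_baseSet := isOpen_Uset i
  source_eq := rfl
  target_eq := rfl
  proj_toFun := fun e _ => rfl

end Chart

end Stmt4Aux

/- STATEMENT 4: π : E → ℙ¹(ℂ) is a locally trivial fiber bundle: π is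
continuous and every point of ℙ¹(ℂ) lies in the base set of a trivialization
of π with model fiber the fiber over [0 : 1]. -/
theorem stmt_4 (d : ℕ) (hd : 1 ≤ d) :
    Continuous (pr d) ∧
    ∀ b : P1, ∃ t : Bundle.Trivialization
        (↥(pr d ⁻¹' {Projectivization.mk ℂ ![0, 1] (by
          intro h; have := congrFun h 1; simp at this)})) (pr d),
      b ∈ t.baseSet := by
  constructor
  · exact Stmt4Aux.continuous_pr
  · intro b
    by_cases h1 : b.rep 1 ≠ 0
    · exact ⟨Stmt4Aux.chart d 1, h1⟩
    · push_neg at h1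
      have h0 : b.rep 0 ≠ 0 := by
        intro h0
        apply b.rep_nonzero
        funext j
        fin_cases j
        · exact h0
        · exact h1
      exact ⟨Stmt4Aux.chart d 0, h0⟩

end
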